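/- Let ⊢⊣, → be relations on a set A such that ⊢⊣ is symmetric and → ∘ ⊢⊣* is well-founded. Then → is Church-Rosser modulo ⊢⊣* if and only if both (i) ← ∘ → ⊆ →* ∘ ⊢⊣* ∘ ←*, and (ii) ⊢⊣ ∘ → ⊆ →* ∘ ⊢⊣* ∘ ←*. -/

import Mathlib

namespace CRMHuet

open Relation



variable {A : Type*} (hd ar : A → A → Prop)

def HStep (x y : A) : Prop := ar x y ∨ ar y x ∨ hd x y

def HBase (x y : A) : Prop :=
  ∃ z w, ReflTransGen hd x z ∧ ar z w ∧ ReflTransGen hd w y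

/-- `HLt y x` : `y` is strictly smaller than `x`. -/
def HLt (y x : A) : Prop := TransGen (HBase hd ar) x y

def HD (a c : A) : Prop :=
  ∃ u v, ReflTransGen ar a u ∧ ReflTransGen hd u v ∧ ReflTransGen ar c v

inductive HChain : A → List A → A → Prop
  | nil {a : A} : HChain a [] a
  | cons {a b c : A} {l : List A} :
      HStep hd ar a b → HChain b l c → HChain a (b :: l) c

def HMlt (N M : Multiset A) : Prop :=
  ∃ c Z Y, M = c ::ₘ Z ∧ N = Z + Y ∧ ∀ y ∈ Y, HLt hd ar y c

/-! ### basic lemmas -/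

lemma hdstar_symm (hsym : ∀ a b, hd a b → hd b a) {x y : A}
    (h : ReflTransGen hd x y) : ReflTransGen hd y x := by
  induction h with
  | refl => exact .refl
  | tail _ h2 ih => exact ReflTransGen.head (hsym _ _ h2) ih

lemma rtg_cases {r : A → A → Prop} {a b : A} (h : ReflTransGen r a b) :
    a = b ∨ TransGen r a b := by
  induction h with
  | refl => exact .inl rfl
  | tail _ h2 ih =>
    rcases ih with rfl | t
    · exact .inr (.single h2)
    · exact .inr (t.tail h2)

lemma acc_no_self {r : A → A → Prop} {a : A} (h : Acc r a) : ¬ r a a := by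
  induction h with
  | intro x _ ih => exact fun hxx => ih x hxx hxx

/-! ### well-foundedness -/

lemma wf_base
    (hwf : ¬ ∃ f : ℕ → A, ∀ n, Relation.Comp ar (ReflTransGen hd) (f n) (f (n + 1))) :
    WellFounded (fun x y => HBase hd ar y x) := by
  by_contra h
  have h1 : ∃ a, ¬ Acc (fun x y => HBase hd ar y x) a := by
    by_contra h2
    push_neg at h2
    exact h ⟨h2⟩
  have h3 : ∀ a, ¬ Acc (fun x y => HBase hd ar y x) a →
      ∃ b, HBase hd ar a b ∧ ¬ Acc (fun x y => HBase hd ar y x) b := by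
    intro a ha
    by_contra hb
    push_neg at hb
    exact ha (Acc.intro a fun b hba => hb b hba)
  obtain ⟨a0, ha0⟩ := h1
  choose g hg1 hg2 using h3
  let f : ℕ → {x : A // ¬ Acc (fun x y => HBase hd ar y x) x} :=
    fun n => Nat.rec ⟨a0, ha0⟩ (fun _ p => ⟨g p.1 p.2, hg2 p.1 p.2⟩) n
  have hf : ∀ n, HBase hd ar (f n).1 (f (n + 1)).1 := fun n => hg1 _ _
  apply hwf
  choose z w hz hw hw' using hf
  exact ⟨z, fun n => ⟨w n, hw n, (hw' n).trans (hz (n + 1))⟩⟩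

lemma wf_lt
    (hwf : ¬ ∃ f : ℕ → A, ∀ n, Relation.Comp ar (ReflTransGen hd) (f n) (f (n + 1))) :
    WellFounded (HLt hd ar) := by
  have := (wf_base hd ar hwf).transGen
  exact Subrelation.wf (fun {x y} h => TransGen.swap _ _ h) this

lemma hlt_irrefl
    (hwf : ¬ ∃ f : ℕ → A, ∀ n, Relation.Comp ar (ReflTransGen hd) (f n) (f (n + 1)))
    (a : A) : ¬ HLt hd ar a a :=
  acc_no_self ((wf_lt hd ar hwf).apply a)

/-! ### absorption -/

lemma base_absorb_left {x p q : A} (h : ReflTransGen hd x p) (hb : HBase hd ar p q) :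
    HBase hd ar x q := by
  obtain ⟨z, w, h1, h2, h3⟩ := hb
  exact ⟨z, w, h.trans h1, h2, h3⟩

lemma base_absorb_right {p q r : A} (hb : HBase hd ar p q) (h : ReflTransGen hd q r) :
    HBase hd ar p r := by
  obtain ⟨z, w, h1, h2, h3⟩ := hb
  exact ⟨z, w, h1, h2, h3.trans h⟩

lemma lt_absorb_left {x p w : A} (h : ReflTransGen hd x p)
    (ht : TransGen (HBase hd ar) p w) : TransGen (HBase hd ar) x w := by
  induction ht with
  | single hb => exact .single (base_absorb_left hd ar h hb)
  | tail _ hb ih => exact ih.tail hb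

lemma lt_absorb_right {p w q : A} (ht : TransGen (HBase hd ar) p w)
    (h : ReflTransGen hd w q) : TransGen (HBase hd ar) p q := by
  cases ht with
  | single hb => exact .single (base_absorb_right hd ar hb h)
  | tail ht' hb => exact ht'.tail (base_absorb_right hd ar hb h)

lemma ar_sub_base {p w : A} (h : TransGen ar p w) : TransGen (HBase hd ar) p w :=
  TransGen.mono (p := HBase hd ar) (fun _ _ hab => ⟨_, _, .refl, hab, .refl⟩) _ _ h

lemma ltArH {x p w z : A} (hxp : ReflTransGen hd x p) (hpw : TransGen ar p w)
    (hwz : ReflTransGen hd w z) : HLt hd ar z x :=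
  lt_absorb_right hd ar (lt_absorb_left hd ar hxp (ar_sub_base hd ar hpw)) hwz



lemma HChain.append {a b c : A} {l m : List A}
    (h1 : HChain hd ar a l b) (h2 : HChain hd ar b m c) :
    HChain hd ar a (l ++ m) c := by
  induction h1 with
  | nil => exact h2
  | cons hs _ ih => exact .cons hs (ih h2)

lemma chain_of_ar_split {p u : A} (h : ReflTransGen ar p u) :
    (∃ l, HChain hd ar p (l ++ [u]) u ∧ TransGen ar p u ∧ ∀ z ∈ l, TransGen ar p z)
      ∨ p = u := by
  induction h using ReflTransGen.head_induction_on with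
  | refl => exact .inr rfl
  | head hab _ ih =>
    left
    rcases ih with ⟨l, hch, htr, hb⟩ | rfl
    · refine ⟨_ :: l, .cons (.inl hab) hch, TransGen.head hab htr, ?_⟩
      intro z hz
      rcases List.mem_cons.mp hz with rfl | hz'
      · exact .single hab
      · exact TransGen.head hab (hb z hz')
    · exact ⟨[], .cons (.inl hab) .nil, .single hab, by simp⟩

lemma chain_of_hd_split {u v : A} (h : ReflTransGen hd u v) :
    (∃ m, HChain hd ar u (m ++ [v]) v ∧ ∀ z ∈ m, ReflTransGen hd u z) ∨ u = v := by
  induction h using ReflTransGen.head_induction_on with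
  | refl => exact .inr rfl
  | head hab _ ih =>
    left
    rcases ih with ⟨m, hch, hb⟩ | rfl
    · refine ⟨_ :: m, .cons (.inr (.inr hab)) hch, ?_⟩
      intro z hz
      rcases List.mem_cons.mp hz with rfl | hz'
      · exact .single hab
      · exact ReflTransGen.head hab (hb z hz')
    · exact ⟨[], .cons (.inr (.inr hab)) .nil, by simp⟩

lemma chain_rev_of_ar {y v : A} (h : ReflTransGen ar y v) :
    (∃ l, HChain hd ar v (l ++ [y]) y ∧ ∀ z ∈ l, TransGen ar y z) ∨ v = y := by
  induction h using ReflTransGen.head_induction_on with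
  | refl => exact .inr rfl
  | @head a c hab _ ih =>
    left
    rcases ih with ⟨l, hch, hb⟩ | rfl
    · refine ⟨l ++ [c], ?_, ?_⟩
      · have h2 : HChain hd ar c [a] a := .cons (.inr (.inl hab)) .nil
        have := HChain.append hd ar hch h2
        simpa [List.append_assoc] using this
      · intro z hz
        rcases List.mem_append.mp hz with hz' | hz'
        · exact TransGen.head hab (hb z hz')
        · rcases List.mem_singleton.mp hz' with rfl
          exact .single hab
    · exact ⟨[], .cons (.inr (.inl hab)) .nil, by simp⟩

def VB (p u y z : A) : Prop :=
  (∃ w, TransGen ar p w ∧ ReflTransGen hd w z) ∨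
  (∃ w, TransGen ar y w ∧ ReflTransGen hd w z) ∨
  (p = u ∧ ReflTransGen hd p z)

lemma valley_chain {p u v y : A} (h1 : ReflTransGen ar p u) (h2 : ReflTransGen hd u v)
    (h3 : ReflTransGen ar y v) :
    (∃ li, HChain hd ar p (li ++ [y]) y ∧ ∀ z ∈ li, VB hd ar p u y z) ∨ p = y := by
  rcases chain_rev_of_ar hd ar h3 with ⟨l3, hch3, hb3⟩ | rfl
  · -- nontrivial third segment, result is `inl`
    left
    rcases chain_of_hd_split hd ar h2 with ⟨m, hch2, hb2⟩ | rfl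
    · rcases chain_of_ar_split hd ar h1 with ⟨l1, hch1, htr1, hb1⟩ | rfl
      · refine ⟨(l1 ++ [u]) ++ (m ++ [v]) ++ l3, ?_, ?_⟩
        · have := HChain.append hd ar (HChain.append hd ar hch1 hch2) hch3
          simpa [List.append_assoc] using this
        · intro z hz
          rcases List.mem_append.mp hz with hz' | hz'
          · rcases List.mem_append.mp hz' with hz'' | hz''
            · rcases List.mem_append.mp hz'' with hz3 | hz3
              · exact .inl ⟨z, hb1 z hz3, .refl⟩
              · rcases List.mem_singleton.mp hz3 with rfl
                exact .inl ⟨z, htr1, .refl⟩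
            · rcases List.mem_append.mp hz'' with hz3 | hz3
              · exact .inl ⟨u, htr1, hb2 z hz3⟩
              · rcases List.mem_singleton.mp hz3 with rfl
                exact .inl ⟨u, htr1, h2⟩
          · exact .inr (.inl ⟨z, hb3 z hz', .refl⟩)
      · -- p = u
        refine ⟨(m ++ [v]) ++ l3, ?_, ?_⟩
        · have := HChain.append hd ar hch2 hch3
          simpa [List.append_assoc] using this
        · intro z hz
          rcases List.mem_append.mp hz with hz' | hz'
          · rcases List.mem_append.mp hz' with hz3 | hz3
            · exact .inr (.inr ⟨rfl, hb2 z hz3⟩)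
            · rcases List.mem_singleton.mp hz3 with rfl
              exact .inr (.inr ⟨rfl, h2⟩)
          · exact .inr (.inl ⟨z, hb3 z hz', .refl⟩)
    · -- u = v
      rcases chain_of_ar_split hd ar h1 with ⟨l1, hch1, htr1, hb1⟩ | rfl
      · refine ⟨(l1 ++ [u]) ++ l3, ?_, ?_⟩
        · have := HChain.append hd ar hch1 hch3
          simpa [List.append_assoc] using this
        · intro z hz
          rcases List.mem_append.mp hz with hz' | hz'
          · rcases List.mem_append.mp hz' with hz3 | hz3
            · exact .inl ⟨z, hb1 z hz3, .refl⟩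
            · rcases List.mem_singleton.mp hz3 with rfl
              exact .inl ⟨z, htr1, .refl⟩
          · exact .inr (.inl ⟨z, hb3 z hz', .refl⟩)
      · -- p = u = v
        exact ⟨l3, hch3, fun z hz => .inr (.inl ⟨z, hb3 z hz, .refl⟩)⟩
  · -- v = y
    rcases chain_of_hd_split hd ar h2 with ⟨m, hch2, hb2⟩ | rfl
    · left
      rcases chain_of_ar_split hd ar h1 with ⟨l1, hch1, htr1, hb1⟩ | rfl
      · refine ⟨(l1 ++ [u]) ++ m, ?_, ?_⟩
        · have := HChain.append hd ar hch1 hch2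
          simpa [List.append_assoc] using this
        · intro z hz
          rcases List.mem_append.mp hz with hz' | hz'
          · rcases List.mem_append.mp hz' with hz3 | hz3
            · exact .inl ⟨z, hb1 z hz3, .refl⟩
            · rcases List.mem_singleton.mp hz3 with rfl
              exact .inl ⟨z, htr1, .refl⟩
          · exact .inl ⟨u, htr1, hb2 z hz'⟩
      · -- p = u
        exact ⟨m, hch2, fun z hz => .inr (.inr ⟨rfl, hb2 z hz⟩)⟩
    · -- u = v = y
      rcases chain_of_ar_split hd ar h1 with ⟨l1, hch1, htr1, hb1⟩ | rfl
      · exact .inl ⟨l1, hch1, fun z hz => .inl ⟨z, hb1 z hz, .refl⟩⟩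
      · exact .inr rfl


variable (lt : A → A → Prop)
def MLt (N M : Multiset A) : Prop :=
  ∃ c Z Y, M = c ::ₘ Z ∧ N = Z + Y ∧ ∀ y ∈ Y, lt y c

lemma mlt_wf (wlt : WellFounded lt) : WellFounded (MLt lt) := by
  have acc0 : Acc (MLt lt) 0 := by
    constructor
    rintro N ⟨c, Z, Y, hM, -, -⟩
    exact absurd hM.symm (Multiset.cons_ne_zero)
  have key : ∀ a : A, ∀ M : Multiset A, Acc (MLt lt) M → Acc (MLt lt) (a ::ₘ M) := by
    intro a
    induction a using WellFounded.induction wlt with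
    | _ a IH1 =>
      intro M hM
      induction hM with
      | intro M hacc IH2 =>
        constructor
        rintro N ⟨c, Z, Y, hMZ, hN, hY⟩
        rcases Multiset.cons_eq_cons.mp hMZ with ⟨rfl, rfl⟩ | ⟨hne, W, hMW, hZW⟩
        · -- removed a itself ; N = M + Y with all of Y below a
          have haux : ∀ Y' : Multiset A, (∀ y ∈ Y', lt y a) → Acc (MLt lt) (M + Y') := by
            intro Y'
            induction Y' using Multiset.induction with
            | empty => intro _; simpa using Acc.intro M hacc
            | cons b Y'' ihY =>
              intro hby
              have hac : Acc (MLt lt) (M + Y'') :=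
                ihY (fun y hy => hby y (Multiset.mem_cons_of_mem hy))
              have := IH1 b (hby b (Multiset.mem_cons_self b Y'')) (M + Y'') hac
              rwa [Multiset.add_cons]
          rw [hN]
          exact haux Y hY
        · -- removed something inside M
          have hlt : MLt lt (W + Y) M := ⟨c, W, Y, hMW, rfl, hY⟩
          have := IH2 (W + Y) hlt
          rwa [hN, hZW, Multiset.cons_add]
  exact ⟨fun M => Multiset.induction acc0 (fun a M h => key a M h) M⟩

lemma mlt_cons {N M : Multiset A} {b : A} (h : MLt lt N M) :
    MLt lt (b ::ₘ N) (b ::ₘ M) := by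
  obtain ⟨c, Z, Y, h1, h2, h3⟩ := h
  exact ⟨c, b ::ₘ Z, Y, by rw [h1, Multiset.cons_swap], by rw [h2, Multiset.cons_add], h3⟩

lemma tmlt_cons {N M : Multiset A} {b : A} (h : TransGen (MLt lt) N M) :
    TransGen (MLt lt) (b ::ₘ N) (b ::ₘ M) := by
  induction h with
  | single h => exact .single (mlt_cons lt h)
  | tail _ h ih => exact ih.tail (mlt_cons lt h)


/-! ### measure helpers -/

lemma coe_app_cons (li t : List A) (y : A) :
    (↑(li ++ y :: t) : Multiset A) = (y ::ₘ ↑t) + ↑li :=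
  calc (↑(li ++ y :: t) : Multiset A)
      = ↑li + ↑(y :: t) := (Multiset.coe_add _ _).symm
    _ = ↑(y :: t) + ↑li := add_comm _ _
    _ = (y ::ₘ ↑t) + ↑li := by rw [Multiset.cons_coe]

lemma tmlt_two {lt : A → A → Prop} (x y : A) (t : List A) :
    TransGen (MLt lt) ↑t ↑(x :: y :: t) := by
  have s1 : MLt lt ↑(y :: t) ↑(x :: y :: t) :=
    ⟨x, ↑(y :: t), 0, by simp [Multiset.cons_coe], by simp, by simp⟩
  have s2 : MLt lt ↑t ↑(y :: t) :=
    ⟨y, ↑t, 0, by simp [Multiset.cons_coe], by simp, by simp⟩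
  exact TransGen.tail (.single s2) s1

/-! ### the scanning lemmas -/

theorem HL (hsym : ∀ a b, hd a b → hd b a)
    (hyp1 : ∀ a b c, ar b a → ar b c → HD hd ar a c)
    (hyp2 : ∀ a b c, hd a b → ar b c → HD hd ar a c) :
    ∀ (l : List A) (p x c : A), ar x p → HChain hd ar x l c →
      ReflTransGen ar c x ∨
      ∃ l', HChain hd ar p l' c ∧ TransGen (MLt (HLt hd ar)) ↑l' ↑(x :: l) := by
  intro l
  induction l with
  | nil =>
    intro p x c _ hch
    cases hch
    exact .inl .refl
  | cons y t ih =>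
    intro p x c hpx hch
    cases hch with
    | cons hstep htail =>
      by_cases h1 : ar x y
      · -- peak  p ← x → y
        right
        obtain ⟨u, v, hv1, hv2, hv3⟩ := hyp1 p x y hpx h1
        rcases valley_chain hd ar hv1 hv2 hv3 with ⟨li, hchv, hbv⟩ | rfl
        · refine ⟨li ++ (y :: t), ?_, .single ?_⟩
          · have := HChain.append hd ar hchv htail
            simpa [List.append_assoc] using this
          · refine ⟨x, y ::ₘ ↑t, ↑li, by simp [Multiset.cons_coe], coe_app_cons li t y, ?_⟩
            intro z hz
            rcases hbv z (by simpa using hz) with ⟨w, hw1, hw2⟩ | ⟨w, hw1, hw2⟩ | ⟨hpu, hpz⟩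
            · exact ltArH hd ar .refl (TransGen.head hpx hw1) hw2
            · exact ltArH hd ar .refl (TransGen.head h1 hw1) hw2
            · exact .single ⟨x, p, .refl, hpx, hpz⟩
        · exact ⟨t, htail, tmlt_two x p t⟩
      · by_cases h2 : hd x y
        · -- co-cliff  p ← x ~ y
          right
          obtain ⟨u, v, hv1, hv2, hv3⟩ := hyp2 y x p (hsym x y h2) hpx
          rcases valley_chain hd ar hv3 (hdstar_symm hd hsym hv2) hv1
            with ⟨li, hchv, hbv⟩ | rfl
          · refine ⟨li ++ (y :: t), ?_, .single ?_⟩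
            · have := HChain.append hd ar hchv htail
              simpa [List.append_assoc] using this
            · refine ⟨x, y ::ₘ ↑t, ↑li, by simp [Multiset.cons_coe], coe_app_cons li t y, ?_⟩
              intro z hz
              rcases hbv z (by simpa using hz) with ⟨w, hw1, hw2⟩ | ⟨w, hw1, hw2⟩ | ⟨hpu, hpz⟩
              · exact ltArH hd ar .refl (TransGen.head hpx hw1) hw2
              · exact ltArH hd ar (ReflTransGen.single h2) hw1 hw2
              · exact .single ⟨x, p, .refl, hpx, hpz⟩
          · exact ⟨t, htail, tmlt_two x p t⟩
        · -- keep scanning L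
          have h3 : ar y x := by
            rcases hstep with h | h | h
            · exact absurd h h1
            · exact h
            · exact absurd h h2
          rcases ih x y c h3 htail with hcy | ⟨l'', hch'', hm⟩
          · exact .inl (hcy.tail h3)
          · right
            refine ⟨x :: l'', .cons (.inr (.inl hpx)) hch'', ?_⟩
            simpa [Multiset.cons_coe] using tmlt_cons (HLt hd ar) (b := x) hm

theorem HE (hsym : ∀ a b, hd a b → hd b a)
    (hwf : ¬ ∃ f : ℕ → A, ∀ n, Relation.Comp ar (ReflTransGen hd) (f n) (f (n + 1)))
    (hyp1 : ∀ a b c, ar b a → ar b c → HD hd ar a c)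
    (hyp2 : ∀ a b c, hd a b → ar b c → HD hd ar a c) :
    ∀ (l : List A) (a b c : A), hd a b → HChain hd ar b l c →
      (∃ v, ReflTransGen hd b v ∧ ReflTransGen ar c v) ∨
      ∃ l', HChain hd ar a l' c ∧ TransGen (MLt (HLt hd ar)) ↑l' ↑(b :: l) := by
  intro l
  induction l with
  | nil =>
    intro a b c _ hch
    cases hch
    exact .inl ⟨b, .refl, .refl⟩
  | cons d s ih =>
    intro a b c hab hch
    cases hch with
    | cons hstep htail =>
      by_cases h1 : ar b d
      · -- cliff  a ~ b → d
        right
        obtain ⟨u, v, hv1, hv2, hv3⟩ := hyp2 a b d hab h1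
        rcases valley_chain hd ar hv1 hv2 hv3 with ⟨li, hchv, hbv⟩ | rfl
        · refine ⟨li ++ (d :: s), ?_, .single ?_⟩
          · have := HChain.append hd ar hchv htail
            simpa [List.append_assoc] using this
          · refine ⟨b, d ::ₘ ↑s, ↑li, by simp [Multiset.cons_coe], coe_app_cons li s d, ?_⟩
            intro z hz
            rcases hbv z (by simpa using hz) with ⟨w, hw1, hw2⟩ | ⟨w, hw1, hw2⟩ | ⟨hpu, hpz⟩
            · exact ltArH hd ar (ReflTransGen.single (hsym a b hab)) hw1 hw2
            · exact ltArH hd ar .refl (TransGen.head h1 hw1) hw2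
            · -- impossible by well-foundedness
              exfalso
              subst hpu
              have hvb : HBase hd ar v d :=
                ⟨b, d, ReflTransGen.tail (hdstar_symm hd hsym hv2) hab, h1, .refl⟩
              have hvv : TransGen (HBase hd ar) v v := by
                rcases rtg_cases hv3 with heq | htg
                · subst heq
                  exact .single hvb
                · exact TransGen.head hvb (ar_sub_base hd ar htg)
              exact hlt_irrefl hd ar hwf v hvv
        · exact ⟨s, htail, tmlt_two b a s⟩
      · by_cases h2 : hd b d
        · -- keep scanning E
          rcases ih b d c h2 htail with ⟨v, hv1, hv2⟩ | ⟨l'', hch'', hm⟩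
          · exact .inl ⟨v, ReflTransGen.head h2 hv1, hv2⟩
          · right
            refine ⟨b :: l'', .cons (.inr (.inr hab)) hch'', ?_⟩
            simpa [Multiset.cons_coe] using tmlt_cons (HLt hd ar) (b := b) hm
        · -- switch to L phase
          have h3 : ar d b := by
            rcases hstep with h | h | h
            · exact absurd h h1
            · exact h
            · exact absurd h h2
          rcases HL hd ar hsym hyp1 hyp2 s b d c h3 htail with hcd | ⟨l'', hch'', hm⟩
          · exact .inl ⟨b, .refl, ReflTransGen.tail hcd h3⟩
          · right
            refine ⟨b :: l'', .cons (.inr (.inr hab)) hch'', ?_⟩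
            simpa [Multiset.cons_coe] using tmlt_cons (HLt hd ar) (b := b) hm

theorem HR (hsym : ∀ a b, hd a b → hd b a)
    (hwf : ¬ ∃ f : ℕ → A, ∀ n, Relation.Comp ar (ReflTransGen hd) (f n) (f (n + 1)))
    (hyp1 : ∀ a b c, ar b a → ar b c → HD hd ar a c)
    (hyp2 : ∀ a b c, hd a b → ar b c → HD hd ar a c) :
    ∀ (l : List A) (a c : A), HChain hd ar a l c →
      HD hd ar a c ∨ ∃ l', HChain hd ar a l' c ∧ TransGen (MLt (HLt hd ar)) ↑l' ↑l := by
  intro l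
  induction l with
  | nil =>
    intro a c hch
    cases hch
    exact .inl ⟨a, a, .refl, .refl, .refl⟩
  | cons b t ih =>
    intro a c hch
    cases hch with
    | cons hstep htail =>
      by_cases h1 : ar a b
      · rcases ih b c htail with ⟨u, v, d1, d2, d3⟩ | ⟨l'', hch'', hm⟩
        · exact .inl ⟨u, v, ReflTransGen.head h1 d1, d2, d3⟩
        · refine .inr ⟨b :: l'', .cons (.inl h1) hch'', ?_⟩
          simpa [Multiset.cons_coe] using tmlt_cons (HLt hd ar) (b := b) hm
      · by_cases h2 : hd a b
        · rcases HE hd ar hsym hwf hyp1 hyp2 t a b c h2 htail with ⟨v, hv1, hv2⟩ | ⟨l', h', hm⟩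
          · exact .inl ⟨a, v, .refl, ReflTransGen.head h2 hv1, hv2⟩
          · exact .inr ⟨l', h', hm⟩
        · have h3 : ar b a := by
            rcases hstep with h | h | h
            · exact absurd h h1
            · exact h
            · exact absurd h h2
          rcases HL hd ar hsym hyp1 hyp2 t a b c h3 htail with hcb | ⟨l', h', hm⟩
          · exact .inl ⟨a, a, .refl, .refl, ReflTransGen.tail hcb h3⟩
          · exact .inr ⟨l', h', hm⟩

theorem main (hsym : ∀ a b, hd a b → hd b a)
    (hwf : ¬ ∃ f : ℕ → A, ∀ n, Relation.Comp ar (ReflTransGen hd) (f n) (f (n + 1)))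
    (hyp1 : ∀ a b c, ar b a → ar b c → HD hd ar a c)
    (hyp2 : ∀ a b c, hd a b → ar b c → HD hd ar a c) :
    ∀ (l : List A) (a c : A), HChain hd ar a l c → HD hd ar a c := by
  have wfm : WellFounded (TransGen (MLt (HLt hd ar))) :=
    (mlt_wf (HLt hd ar) (wf_lt hd ar hwf)).transGen
  intro l a c h
  refine WellFounded.induction wfm
    (C := fun M => ∀ (l : List A) (a c : A), (↑l : Multiset A) = M →
      HChain hd ar a l c → HD hd ar a c) (↑l) ?_ l a c rfl h
  intro M IH l a c hM hch
  rcases HR hd ar hsym hwf hyp1 hyp2 l a c hch with hD | ⟨l', h', hm⟩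
  · exact hD
  · exact IH ↑l' (hM ▸ hm) l' a c rfl h'

lemma chain_of_rtg {a b : A} (h : ReflTransGen (HStep hd ar) a b) :
    ∃ l, HChain hd ar a l b := by
  induction h with
  | refl => exact ⟨[], .nil⟩
  | tail _ h2 ih =>
    obtain ⟨l, hl⟩ := ih
    exact ⟨l ++ [_], HChain.append hd ar hl (.cons h2 .nil)⟩

end CRMHuet

/-- Corollary 2.9 (Lemma 2.8 of Huet 1980). -/
theorem crm_iff_huet {A : Type*} (hd ar : A → A → Prop)
    (hsym : ∀ a b, hd a b → hd b a)
    (hwf : ¬ ∃ f : ℕ → A, ∀ n,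
      Relation.Comp ar (Relation.ReflTransGen hd) (f n) (f (n + 1))) :
    (∀ a b, Relation.ReflTransGen (fun x y => ar x y ∨ ar y x ∨ hd x y) a b →
      ∃ u v, Relation.ReflTransGen ar a u ∧ Relation.ReflTransGen hd u v ∧
        Relation.ReflTransGen ar b v)
    ↔
    ((∀ a b c, ar b a → ar b c →
      ∃ u v, Relation.ReflTransGen ar a u ∧ Relation.ReflTransGen hd u v ∧
        Relation.ReflTransGen ar c v) ∧
     (∀ a b c, hd a b → ar b c →
      ∃ u v, Relation.ReflTransGen ar a u ∧ Relation.ReflTransGen hd u v ∧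
        Relation.ReflTransGen ar c v)) := by
  constructor
  · intro hcr
    constructor
    · intro a b c hba hbc
      exact hcr a c (Relation.ReflTransGen.head (Or.inr (Or.inl hba))
        (Relation.ReflTransGen.single (Or.inl hbc)))
    · intro a b c hab hbc
      exact hcr a c (Relation.ReflTransGen.head (Or.inr (Or.inr hab))
        (Relation.ReflTransGen.single (Or.inl hbc)))
  · rintro ⟨hyp1, hyp2⟩ a b h
    obtain ⟨l, hch⟩ := CRMHuet.chain_of_rtg hd ar h
    exact CRMHuet.main hd ar hsym hwf hyp1 hyp2 l a b hch
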